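/- arXiv:1809.00109 — 2 statements merged into one kernel-verified Lean document; each statement's English description precedes it below -/
import Mathlib

section
/- Suppose two agents have desired (homogeneous-transformation) positions p_HT and q_HT with ‖p_HT − q_HT‖ ≥ λ1·d_s, and their actual positions p, q satisfy ‖p − p_HT‖ ≤ δ and ‖q − q_HT‖ ≤ δ. If λ1 ≥ (δ + ε)/(δ_max + ε) where δ_max = (d_s − 2ε)/2, then ‖p − q‖ ≥ 2ε; i.e., the two agents, each enclosed in a ball of radius ε, do not collide. -/
/-- Euclidean norm on the plane. -/
noncomputable def norm2 (v : Fin 2 → ℝ) : ℝ := Real.sqrt (v 0 ^ 2 + v 1 ^ 2)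

lemma norm2_eq (v : Fin 2 → ℝ) : norm2 v = ‖(show EuclideanSpace ℝ (Fin 2) from WithLp.toLp 2 v)‖ := by
  rw [EuclideanSpace.norm_eq, Fin.sum_univ_two]
  simp [norm2, sq_abs]

lemma tri_aux {E : Type*} [SeminormedAddCommGroup E] (p q a b : E) :
    ‖a - b‖ ≤ ‖p - q‖ + ‖p - a‖ + ‖q - b‖ := by
  have h : a - b = -(p - a) + (p - q) + (q - b) := by abel
  rw [h]
  calc ‖-(p - a) + (p - q) + (q - b)‖ ≤ ‖-(p - a) + (p - q)‖ + ‖(q - b)‖ :=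
        norm_add_le _ _
    _ ≤ ‖-(p - a)‖ + ‖(p - q)‖ + ‖(q - b)‖ := by
        gcongr; exact norm_add_le _ _
    _ = ‖(p - q)‖ + ‖(p - a)‖ + ‖(q - b)‖ := by rw [norm_neg]; ring

lemma norm2_triangle3 (p q a b : Fin 2 → ℝ) :
    norm2 (a - b) ≤ norm2 (p - q) + norm2 (p - a) + norm2 (q - b) := by
  simp only [norm2_eq]
  have := tri_aux (E := EuclideanSpace ℝ (Fin 2)) (WithLp.toLp 2 p) (WithLp.toLp 2 q) (WithLp.toLp 2 a) (WithLp.toLp 2 b)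
  simpa only [← WithLp.toLp_sub] using this

/-- deviation-bounded agents tracking a continuum deformation whose minimum
eigenvalue satisfies λ1 ≥ (δ+ε)/(δmax+ε), with δmax = (d_s − 2ε)/2, do not collide. -/
theorem stmt6 (p q pHT qHT : Fin 2 → ℝ)
    (ds ε δ δmax lam1 : ℝ)
    (hε : 0 < ε) (hds : 2 * ε < ds) (hδ : 0 ≤ δ) (hlam : 0 < lam1)
    (hδmax : δmax = (ds - 2 * ε) / 2)
    (hsep : norm2 (pHT - qHT) ≥ lam1 * ds)
    (htrp : norm2 (p - pHT) ≤ δ) (htrq : norm2 (q - qHT) ≤ δ)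
    (hcond : lam1 ≥ (δ + ε) / (δmax + ε)) :
    norm2 (p - q) ≥ 2 * ε := by
  have hds2 : δmax + ε = ds / 2 := by rw [hδmax]; ring
  have hpos : (0:ℝ) < ds / 2 := by linarith
  have hlamds : lam1 * ds ≥ 2 * (δ + ε) := by
    have := (div_le_iff₀ hpos).mp (hds2 ▸ hcond)
    nlinarith
  have htri := norm2_triangle3 p q pHT qHT
  linarith [hsep, htrp, htrq]
end

section
/- Let T be a closed triangle in ℝ² with vertices P1, P2, P3 and let p ∈ T be at distance ≥ d_b from each edge of T. Let f(x) = R U x + D with R orthogonal and U symmetric positive definite with smallest eigenvalue λ1. Then f(p) is at distance ≥ λ1·d_b from each edge of the image triangle f(T). -/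
set_option maxHeartbeats 1000000

open Matrix Metric

lemma aux_U (U : Matrix (Fin 2) (Fin 2) ℝ) (hU : U.IsHermitian) (hUpos : U.PosDef)
    (lam1 lam2 : ℝ) (h1 : hU.eigenvalues 0 = lam1) (h2 : hU.eigenvalues 1 = lam2)
    (hle : lam1 ≤ lam2) (v : EuclideanSpace ℝ (Fin 2)) :
    lam1 * ‖v‖ ≤ ‖Matrix.toEuclideanLin U v‖ := by
  have hpos1 : 0 < lam1 := h1 ▸ hUpos.eigenvalues_pos 0
  have hpos2 : 0 < lam2 := h2 ▸ hUpos.eigenvalues_pos 1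
  have hsa : LinearMap.adjoint (Matrix.toEuclideanLin U) = Matrix.toEuclideanLin U := by
    rw [← Matrix.toEuclideanLin_conjTranspose_eq_adjoint, hU]
  have hev : ∀ i, Matrix.toEuclideanLin U (hU.eigenvectorBasis i)
      = hU.eigenvalues i • hU.eigenvectorBasis i := by
    intro i
    have := hU.mulVec_eigenvectorBasis i
    ext j
    have h2 := congrFun this j
    simpa [Matrix.toEuclideanLin_apply] using h2
  have hrepr : ∀ i, hU.eigenvectorBasis.repr (Matrix.toEuclideanLin U v) i
      = hU.eigenvalues i * hU.eigenvectorBasis.repr v i := by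
    intro i
    rw [hU.eigenvectorBasis.repr_apply_apply, hU.eigenvectorBasis.repr_apply_apply]
    have step1 : (inner ℝ (hU.eigenvectorBasis i) (Matrix.toEuclideanLin U v) : ℝ)
        = inner ℝ (Matrix.toEuclideanLin U (hU.eigenvectorBasis i)) v := by
      conv_rhs => rw [← hsa]
      exact (LinearMap.adjoint_inner_left (Matrix.toEuclideanLin U) v (hU.eigenvectorBasis i)).symm
    rw [step1, hev i, real_inner_smul_left]
  have hnorm : ∀ w : EuclideanSpace ℝ (Fin 2),
      ‖w‖ ^ 2 = (hU.eigenvectorBasis.repr w 0) ^ 2 + (hU.eigenvectorBasis.repr w 1) ^ 2 := by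
    intro w
    rw [← hU.eigenvectorBasis.repr.norm_map w, EuclideanSpace.norm_eq,
      Real.sq_sqrt (by positivity)]
    simp [Fin.sum_univ_two, sq_abs]
  have hsq : (lam1 * ‖v‖) ^ 2 ≤ ‖Matrix.toEuclideanLin U v‖ ^ 2 := by
    rw [mul_pow, hnorm, hnorm, hrepr 0, hrepr 1, h1, h2]
    nlinarith [sq_nonneg (hU.eigenvectorBasis.repr v 0), sq_nonneg (hU.eigenvectorBasis.repr v 1),
      sq_nonneg (hU.eigenvectorBasis.repr v 0 * (lam2 - lam1)),
      sq_nonneg (hU.eigenvectorBasis.repr v 1 * (lam2 - lam1))]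
  have h1' : 0 ≤ lam1 * ‖v‖ := by positivity
  nlinarith [norm_nonneg (Matrix.toEuclideanLin U v)]

lemma aux_R (R : Matrix (Fin 2) (Fin 2) ℝ) (hR : Rᵀ * R = 1) (w : EuclideanSpace ℝ (Fin 2)) :
    ‖Matrix.toEuclideanLin R w‖ = ‖w‖ := by
  have hct : Rᴴ = Rᵀ := rfl
  have h : (inner ℝ (Matrix.toEuclideanLin R w) (Matrix.toEuclideanLin R w) : ℝ)
      = (inner ℝ w w : ℝ) := by
    calc (inner ℝ (Matrix.toEuclideanLin R w) (Matrix.toEuclideanLin R w) : ℝ)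
        = inner ℝ w (LinearMap.adjoint (Matrix.toEuclideanLin R) (Matrix.toEuclideanLin R w)) := by
          rw [LinearMap.adjoint_inner_right]
      _ = inner ℝ w (Matrix.toEuclideanLin (Rᵀ * R) w) := by
          rw [← Matrix.toEuclideanLin_conjTranspose_eq_adjoint, hct]
          congr 1
          ext j
          simp [Matrix.toEuclideanLin_apply, Matrix.mulVec_mulVec]
      _ = (inner ℝ w w : ℝ) := by rw [hR]; simp [Matrix.toEuclideanLin_apply]
  have := congrArg Real.sqrt h
  rwa [← norm_eq_sqrt_real_inner, ← norm_eq_sqrt_real_inner] at this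

/-- a point of the leading triangle with clearance d_b from each edge keeps
clearance λ1 d_b from each edge of the image triangle under f(x) = R U x + D. -/
theorem stmt8 (P1 P2 P3 p : EuclideanSpace ℝ (Fin 2))
    (hind : LinearIndependent ℝ ![P2 - P1, P3 - P1])
    (hp : p ∈ convexHull ℝ ({P1, P2, P3} : Set (EuclideanSpace ℝ (Fin 2))))
    (db : ℝ)
    (hd12 : infDist p (segment ℝ P1 P2) ≥ db)
    (hd23 : infDist p (segment ℝ P2 P3) ≥ db)
    (hd13 : infDist p (segment ℝ P1 P3) ≥ db)
    (R U : Matrix (Fin 2) (Fin 2) ℝ)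
    (hR : Rᵀ * R = 1) (hU : U.IsHermitian) (hUpos : U.PosDef)
    (lam1 lam2 : ℝ)
    (h1 : hU.eigenvalues 0 = lam1) (h2 : hU.eigenvalues 1 = lam2)
    (hle : lam1 ≤ lam2)
    (D : EuclideanSpace ℝ (Fin 2))
    (f : EuclideanSpace ℝ (Fin 2) → EuclideanSpace ℝ (Fin 2))
    (hf : ∀ x, f x = Matrix.toEuclideanLin (R * U) x + D) :
    infDist (f p) (segment ℝ (f P1) (f P2)) ≥ lam1 * db ∧
    infDist (f p) (segment ℝ (f P2) (f P3)) ≥ lam1 * db ∧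
    infDist (f p) (segment ℝ (f P1) (f P3)) ≥ lam1 * db := by
  have hpos1 : 0 < lam1 := h1 ▸ hUpos.eigenvalues_pos 0
  have hcomp : ∀ v : EuclideanSpace ℝ (Fin 2),
      Matrix.toEuclideanLin (R * U) v = Matrix.toEuclideanLin R (Matrix.toEuclideanLin U v) := by
    intro v; ext j; simp [Matrix.toEuclideanLin_apply, Matrix.mulVec_mulVec]
  have key : ∀ v : EuclideanSpace ℝ (Fin 2), lam1 * ‖v‖ ≤ ‖Matrix.toEuclideanLin (R * U) v‖ := by
    intro v
    rw [hcomp, aux_R R hR]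
    exact aux_U U hU hUpos lam1 lam2 h1 h2 hle v
  have hdist : ∀ x y : EuclideanSpace ℝ (Fin 2), lam1 * dist x y ≤ dist (f x) (f y) := by
    intro x y
    rw [dist_eq_norm, dist_eq_norm, hf, hf]
    have : Matrix.toEuclideanLin (R * U) x + D - (Matrix.toEuclideanLin (R * U) y + D)
        = Matrix.toEuclideanLin (R * U) (x - y) := by
      rw [map_sub]; abel
    rw [this]
    exact key (x - y)
  -- f as an affine map
  set g : EuclideanSpace ℝ (Fin 2) →ᵃ[ℝ] EuclideanSpace ℝ (Fin 2) :=
    AffineMap.mk' f (Matrix.toEuclideanLin (R * U)) D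
      (fun x => by simp [hf, vadd_eq_add]; abel) with hg
  have main : ∀ a c : EuclideanSpace ℝ (Fin 2), infDist p (segment ℝ a c) ≥ db →
      infDist (f p) (segment ℝ (f a) (f c)) ≥ lam1 * db := by
    intro a c hd
    have hseg : segment ℝ (f a) (f c) = f '' segment ℝ a c := by
      have := image_segment ℝ g a c
      simpa [hg] using this.symm
    rw [hseg, ge_iff_le, infDist_eq_iInf]
    have hne : (f '' segment ℝ a c).Nonempty := ⟨f a, ⟨a, left_mem_segment ℝ a c, rfl⟩⟩
    have : Nonempty (f '' segment ℝ a c) := hne.to_subtype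
    refine le_ciInf fun y => ?_
    obtain ⟨z, hz, hzy⟩ := y.2
    have h1' : db ≤ dist p z := le_trans hd (infDist_le_dist_of_mem hz)
    calc lam1 * db ≤ lam1 * dist p z := by nlinarith
      _ ≤ dist (f p) (f z) := hdist p z
      _ = dist (f p) (y : EuclideanSpace ℝ (Fin 2)) := by rw [hzy]
  exact ⟨main P1 P2 hd12, main P2 P3 hd23, main P1 P3 hd13⟩
end
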